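/- Let e be an empirical model with a combinatorial WPS representation e†. Then e is probabilistically contextual if and only if every monotonic extension of e† contains a finite collection of pairwise disjoint sets in the algebra generated by V_M that violates additivity. -/

import Mathlib

open MeasureTheory


/-- A section (event) over a finite set of measurements `U`: an assignment of an
outcome to each measurement in `U`. -/
abbrev Sec {X : Type*} (U : Finset X) (O : Type*) := {x : X // x ∈ U} → O

/-- Restriction of a section over `V` to a subset `U ⊆ V`. -/
def resSec {X O : Type*} {U V : Finset X} (h : U ⊆ V) (s : Sec V O) : Sec U O :=
  fun x => s ⟨x.1, h x.2⟩

/-- The section over the singleton `{x}` induced by a section over `U ∋ x`. -/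
def singleSec {X O : Type*} {U : Finset X} (x : X) (hx : x ∈ U) (s : Sec U O) :
    Sec ({x} : Finset X) O := fun _ => s ⟨x, hx⟩

/-- Restriction of a global section `s : X → O` to a context `C`. -/
def restrictGlobal {X O : Type*} (s : X → O) (C : Finset X) : Sec C O := fun x => s x.1

/-- Marginalization of the distribution `e C` to a subcontext `U ⊆ C`. -/
def margin {X O : Type*} [Fintype X] [DecidableEq X] [Fintype O] [DecidableEq O]
    (e : (C : Finset X) → Sec C O → ℝ) (C U : Finset X) (hU : U ⊆ C) (s : Sec U O) : ℝ :=
  ∑ t ∈ Finset.univ.filter (fun t : Sec C O => resSec hU t = s), e C t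

/-- An empirical model on the scenario `(X, M, O)`: `M` covers `X`, each `e C` for
`C ∈ M` is a probability distribution on sections over `C`, and the family satisfies
the compatibility (generalized no-signaling) condition. -/
def IsEmpiricalModel {X O : Type*} [Fintype X] [DecidableEq X] [Fintype O] [DecidableEq O]
    (M : Finset (Finset X)) (e : (C : Finset X) → Sec C O → ℝ) : Prop :=
  (∀ x : X, ∃ C ∈ M, x ∈ C) ∧
  (∀ C ∈ M, (∀ t : Sec C O, 0 ≤ e C t) ∧ ∑ t : Sec C O, e C t = 1) ∧
  (∀ C ∈ M, ∀ C' ∈ M, ∀ t : Sec ((C ∩ C') : Finset X) O,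
    margin e C (C ∩ C') Finset.inter_subset_left t
      = margin e C' (C ∩ C') Finset.inter_subset_right t)

/-- A global section consistent with the support of the model. -/
def ConsistentGlobal {X O : Type*} (M : Finset (Finset X))
    (e : (C : Finset X) → Sec C O → ℝ) (s : X → O) : Prop :=
  ∀ C ∈ M, e C (restrictGlobal s C) ≠ 0

/-- Strong contextuality: no global section is consistent with the support. -/
def StronglyContextual {X O : Type*} (M : Finset (Finset X))
    (e : (C : Finset X) → Sec C O → ℝ) : Prop :=
  ¬ ∃ s : X → O, ConsistentGlobal M e s

/-- Logical contextuality: some section in the support of some `e C` does not extend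
to a global section consistent with the support. -/
def LogicallyContextual {X O : Type*} (M : Finset (Finset X))
    (e : (C : Finset X) → Sec C O → ℝ) : Prop :=
  ∃ C ∈ M, ∃ t : Sec C O, e C t ≠ 0 ∧
    ¬ ∃ s : X → O, restrictGlobal s C = t ∧ ConsistentGlobal M e s

/-- Probabilistic contextuality: no global distribution marginalizes to every `e C`. -/
def ProbabilisticallyContextual {X O : Type*} [Fintype X] [DecidableEq X]
    [Fintype O] [DecidableEq O] (M : Finset (Finset X))
    (e : (C : Finset X) → Sec C O → ℝ) : Prop :=
  ¬ ∃ d : (X → O) → ℝ, (∀ s, 0 ≤ d s) ∧ (∑ s, d s = 1) ∧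
    ∀ C ∈ M, ∀ t : Sec C O,
      (∑ s ∈ Finset.univ.filter (fun s : X → O => restrictGlobal s C = t), d s) = e C t




/-- The σ-algebra on `Y` generated by the representations of singleton events over
measurements in a context `C` (for finitely many generators this coincides with the
generated algebra `Σ_C`). -/
def genCtx {X O Y : Type*} (Ebar : (U : Finset X) → Sec U O → Set Y)
    (C : Finset X) : MeasurableSpace Y :=
  MeasurableSpace.generateFrom
    {S | ∃ x ∈ C, ∃ s : Sec ({x} : Finset X) O, S = Ebar {x} s}

/-- The set `Σ` of WPS events: the union of the algebras `Σ_C` over contexts `C ∈ M`. -/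
def SigmaOf {X O Y : Type*} (M : Finset (Finset X))
    (Ebar : (U : Finset X) → Sec U O → Set Y) : Set (Set Y) :=
  {A | ∃ C ∈ M, MeasurableSet[genCtx Ebar C] A}

/-- A WPS representation `e† = (E†, Σ, μ)` of an empirical model `e`: an injective
event transfer map satisfying the gluing condition and nonemptiness, with a set
function `μ` satisfying Weak Classicality (WC), Empirical Consistency (EC) and
Mutual Exclusivity (ME). -/
structure WPSRep {X O : Type*} [Fintype X] [DecidableEq X] [Fintype O] [DecidableEq O]
    (M : Finset (Finset X)) (e : (C : Finset X) → Sec C O → ℝ) (Y : Type*) where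
  Ebar : (U : Finset X) → Sec U O → Set Y
  mu : Set Y → ℝ
  inj : ∀ U : Finset X, Function.Injective (Ebar U)
  glue : ∀ (U : Finset X) (s : Sec U O),
    Ebar U s = ⋂ (x : X), ⋂ (hx : x ∈ U), Ebar {x} (singleSec x hx s)
  nonempty : ∀ (U : Finset X) (s : Sec U O), (Ebar U s).Nonempty
  wc_univ : mu Set.univ = 1
  wc_nonneg : ∀ C ∈ M, ∀ A : Set Y, MeasurableSet[genCtx Ebar C] A → 0 ≤ mu A
  wc_le_one : ∀ C ∈ M, ∀ A : Set Y, MeasurableSet[genCtx Ebar C] A → mu A ≤ 1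
  wc_add : ∀ C ∈ M, ∀ A B : Set Y, MeasurableSet[genCtx Ebar C] A →
    MeasurableSet[genCtx Ebar C] B → Disjoint A B → mu (A ∪ B) = mu A + mu B
  ec : ∀ C ∈ M, ∀ (U : Finset X) (hU : U ⊆ C) (s : Sec U O),
    mu (Ebar U s) = margin e C U hU s
  me : ∀ (U : Finset X) (s s' : Sec U O), s ≠ s' → mu (Ebar U s ∩ Ebar U s') = 0

/-- A combinatorial WPS representation: additionally satisfies Strong Mutual
Exclusivity and Exhaustiveness. -/
structure ComboWPSRep {X O : Type*} [Fintype X] [DecidableEq X] [Fintype O] [DecidableEq O]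
    (M : Finset (Finset X)) (e : (C : Finset X) → Sec C O → ℝ) (Y : Type*)
    extends WPSRep M e Y where
  sme : ∀ (U : Finset X) (s s' : Sec U O), s ≠ s' → Ebar U s ∩ Ebar U s' = ∅
  exh : ∀ U : Finset X, (⋃ s : Sec U O, Ebar U s) = Set.univ

/-- The collection `V_M` of representations of events over maximal contexts. -/
def VMSet {X O Y : Type*} (M : Finset (Finset X))
    (Ebar : (U : Finset X) → Sec U O → Set Y) : Set (Set Y) :=
  {A | ∃ C ∈ M, ∃ s : Sec C O, A = Ebar C s}

/-- A monotonic extension `(Y, Σ', μ')` of a WPS `(Y, Σ, μ)`: `Σ'` contains the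
algebra generated by `Σ`, `μ'` restricts to `μ` on `Σ`, is monotone, and takes
values in `[0,1]`. -/
structure MonExt {Y : Type*} (Sigma : Set (Set Y)) (mu : Set Y → ℝ)
    (Sigma' : Set (Set Y)) (mu' : Set Y → ℝ) : Prop where
  sub : Sigma ⊆ Sigma'
  univ_mem : Set.univ ∈ Sigma'
  compl_mem : ∀ A ∈ Sigma', Aᶜ ∈ Sigma'
  union_mem : ∀ A ∈ Sigma', ∀ B ∈ Sigma', A ∪ B ∈ Sigma'
  restricts : ∀ A ∈ Sigma, mu' A = mu A
  mono : ∀ A ∈ Sigma', ∀ B ∈ Sigma', A ⊆ B → mu' A ≤ mu' B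
  nonneg : ∀ A ∈ Sigma', 0 ≤ mu' A
  le_one : ∀ A ∈ Sigma', mu' A ≤ 1


section Helpers
set_option linter.unusedSectionVars false

variable {X O Y : Type*} [Fintype X] [DecidableEq X] [Fintype O] [DecidableEq O]
  {M : Finset (Finset X)} {e : (C : Finset X) → Sec C O → ℝ}

/-- The global cell associated to a global section. -/
def cellOf (W : ComboWPSRep M e Y) (s : X → O) : Set Y :=
  W.Ebar Finset.univ (restrictGlobal s Finset.univ)

lemma restrictGlobal_univ_inj :
    Function.Injective (fun s : X → O => restrictGlobal s (Finset.univ : Finset X)) := by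
  intro s s' h
  funext x
  exact congrFun h ⟨x, Finset.mem_univ x⟩

lemma cellOf_inj (W : ComboWPSRep M e Y) : Function.Injective (cellOf W) := by
  intro s s' h
  exact restrictGlobal_univ_inj (W.inj _ h)

lemma cellOf_disjoint (W : ComboWPSRep M e Y) {s s' : X → O} (h : s ≠ s') :
    cellOf W s ∩ cellOf W s' = ∅ :=
  W.sme _ _ _ (fun he => h (restrictGlobal_univ_inj he))

lemma cellOf_cover (W : ComboWPSRep M e Y) : ⋃ s : X → O, cellOf W s = Set.univ := by
  apply Set.eq_univ_of_univ_subset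
  rw [← W.exh Finset.univ]
  intro y hy
  rcases Set.mem_iUnion.1 hy with ⟨t, ht⟩
  refine Set.mem_iUnion.2 ⟨fun x => t ⟨x, Finset.mem_univ x⟩, ?_⟩
  have : restrictGlobal (fun x => t ⟨x, Finset.mem_univ x⟩) Finset.univ = t := by
    funext p; exact congrArg t (Subtype.ext rfl)
  rw [cellOf, this]; exact ht

lemma Ebar_subset_single (W : ComboWPSRep M e Y) {C : Finset X} {x : X} (hx : x ∈ C)
    (t : Sec C O) : W.Ebar C t ⊆ W.Ebar {x} (singleSec x hx t) := by
  rw [W.glue C]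
  intro y hy
  exact Set.mem_iInter.1 (Set.mem_iInter.1 hy x) hx

lemma cellOf_subset (W : ComboWPSRep M e Y) (C : Finset X) (s : X → O) :
    cellOf W s ⊆ W.Ebar C (restrictGlobal s C) := by
  rw [cellOf, W.glue, W.glue]
  intro y hy
  refine Set.mem_iInter.2 fun x => Set.mem_iInter.2 fun hx => ?_
  have h1 := Set.mem_iInter.1 (Set.mem_iInter.1 hy x) (Finset.mem_univ x)
  have : singleSec x hx (restrictGlobal s C)
      = singleSec x (Finset.mem_univ x) (restrictGlobal s Finset.univ) := rfl
  rw [this]; exact h1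

lemma mem_Ebar_unique (W : ComboWPSRep M e Y) {C : Finset X} {t t' : Sec C O} {y : Y}
    (h : y ∈ W.Ebar C t) (h' : y ∈ W.Ebar C t') : t = t' := by
  by_contra hne
  have := W.sme C t t' hne
  exact absurd (this ▸ Set.mem_inter h h') (Set.notMem_empty y)

lemma Ebar_eq_union_cells (W : ComboWPSRep M e Y) (C : Finset X) (t : Sec C O) :
    W.Ebar C t = ⋃ s ∈ {s : X → O | restrictGlobal s C = t}, cellOf W s := by
  apply Set.Subset.antisymm
  · intro y hy
    have : y ∈ ⋃ s : X → O, cellOf W s := by rw [cellOf_cover W]; trivial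
    rcases Set.mem_iUnion.1 this with ⟨s, hs⟩
    have hsub := cellOf_subset W C s hs
    have := mem_Ebar_unique W hsub hy
    exact Set.mem_biUnion this hs
  · intro y hy
    rcases Set.mem_iUnion₂.1 hy with ⟨s, hs, hy⟩
    have := cellOf_subset W C s hy
    rwa [hs] at this

lemma Ebar_measurable (W : ComboWPSRep M e Y) (C : Finset X) (t : Sec C O) :
    MeasurableSet[genCtx W.Ebar C] (W.Ebar C t) := by
  rw [W.glue]
  refine MeasurableSet.iInter fun x => MeasurableSet.iInter fun hx => ?_
  exact MeasurableSpace.measurableSet_generateFrom ⟨x, hx, singleSec x hx t, rfl⟩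

/-- Saturation induction: if every generator respects the partition by `cells`,
so does every generated-measurable set. -/
lemma sat_induction {ι : Type*} (cells : ι → Set Y) {G : Set (Set Y)}
    (hG : ∀ S ∈ G, ∀ i, cells i ⊆ S ∨ cells i ∩ S = ∅) {A : Set Y}
    (hA : MeasurableSet[MeasurableSpace.generateFrom G] A) :
    ∀ i, cells i ⊆ A ∨ cells i ∩ A = ∅ := by
  have h : MeasurableSpace.GenerateMeasurable G A := hA
  clear hA
  induction h with
  | basic u hu => exact hG u hu
  | empty => intro i; right; exact Set.inter_empty _
  | compl u hu ih =>
      intro i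
      rcases ih i with h | h
      · right
        rw [Set.eq_empty_iff_forall_notMem]
        rintro y ⟨hy1, hy2⟩
        exact hy2 (h hy1)
      · left
        intro y hy hyu
        exact absurd (Set.mem_inter hy hyu) (by rw [h]; exact Set.notMem_empty y)
  | iUnion f hf ih =>
      intro i
      by_cases hex : ∃ n, (cells i ∩ f n).Nonempty
      · rcases hex with ⟨n, hn⟩
        rcases ih n i with h | h
        · left; exact h.trans (Set.subset_iUnion f n)
        · rw [h] at hn; exact absurd hn Set.not_nonempty_empty
      · right
        push_neg at hex
        rw [Set.eq_empty_iff_forall_notMem]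
        rintro y ⟨hy1, hy2⟩
        rcases Set.mem_iUnion.1 hy2 with ⟨n, hn⟩
        exact absurd (Set.mem_inter hy1 hn) (by rw [hex n]; exact Set.notMem_empty y)

end Helpers
section Helpers2
set_option linter.unusedSectionVars false
variable {X O Y : Type*} [Fintype X] [DecidableEq X] [Fintype O] [DecidableEq O]
  {M : Finset (Finset X)} {e : (C : Finset X) → Sec C O → ℝ}

/-- No finite disjoint family violates additivity. -/
def NoViol (M : Finset (Finset X)) (W : ComboWPSRep M e Y)
    (Sigma' : Set (Set Y)) (mu' : Set Y → ℝ) : Prop :=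
  ∀ V : Finset (Set Y),
    (∀ A ∈ V, MeasurableSet[MeasurableSpace.generateFrom (VMSet M W.Ebar)] A) →
    ↑V ⊆ Sigma' →
    (∀ A ∈ V, ∀ B ∈ V, A ≠ B → Disjoint A B) →
    ⋃₀ (V : Set (Set Y)) ∈ Sigma' →
    mu' (⋃₀ (V : Set (Set Y))) = ∑ A ∈ V, mu' A

lemma margin_self (C : Finset X) (t : Sec C O) (h : C ⊆ C) :
    margin e C C h t = e C t := by
  rw [margin]
  have hres : ∀ t' : Sec C O, resSec h t' = t' := by
    intro t'; funext x; exact congrArg t' (Subtype.ext rfl)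
  have : Finset.univ.filter (fun t' : Sec C O => resSec h t' = t) = {t} := by
    ext t'
    simp [hres t']
  rw [this, Finset.sum_singleton]

lemma mu_empty (W : ComboWPSRep M e Y) {C : Finset X} (hC : C ∈ M) : W.mu ∅ = 0 := by
  have := W.wc_add C hC ∅ ∅ (MeasurableSpace.measurableSet_empty _) (MeasurableSpace.measurableSet_empty _) (by simp)
  simp at this
  linarith

lemma mu_biUnion (W : ComboWPSRep M e Y) {C : Finset X} (hC : C ∈ M)
    (F : Finset (Sec C O)) :
    W.mu (⋃ t ∈ F, W.Ebar C t) = ∑ t ∈ F, W.mu (W.Ebar C t) := by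
  classical
  induction F using Finset.induction_on with
  | empty => simpa using mu_empty W hC
  | @insert a F ha ih =>
      rw [Finset.set_biUnion_insert, Finset.sum_insert ha, ← ih]
      apply W.wc_add C hC _ _ (Ebar_measurable W C a)
      · exact (Finset.measurableSet_biUnion F fun t _ => Ebar_measurable W C t)
      · rw [Set.disjoint_iUnion_right]
        intro t
        rw [Set.disjoint_iUnion_right]
        intro htF
        have hne : a ≠ t := fun h => ha (h ▸ htF)
        exact Set.disjoint_iff_inter_eq_empty.2 (W.sme C a t hne)

lemma Ebar_single_eq_union (W : ComboWPSRep M e Y) {x : X} {C : Finset X} (hx : x ∈ C)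
    (a : Sec ({x} : Finset X) O) :
    W.Ebar {x} a = ⋃ t ∈ Finset.univ.filter (fun t : Sec C O => singleSec x hx t = a),
      W.Ebar C t := by
  apply Set.Subset.antisymm
  · intro y hy
    have : y ∈ ⋃ t : Sec C O, W.Ebar C t := by rw [W.exh C]; trivial
    rcases Set.mem_iUnion.1 this with ⟨t, ht⟩
    have hsub := Ebar_subset_single W hx t
    have heq : singleSec x hx t = a := mem_Ebar_unique W (hsub ht) hy
    exact Set.mem_biUnion (Finset.mem_filter.2 ⟨Finset.mem_univ t, heq⟩) ht
  · intro y hy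
    rcases Set.mem_iUnion₂.1 hy with ⟨t, htm, hyt⟩
    have heq : singleSec x hx t = a := (Finset.mem_filter.1 htm).2
    exact heq ▸ Ebar_subset_single W hx t hyt

lemma Ebar_single_measurable_VM (W : ComboWPSRep M e Y)
    (hcov : ∀ x : X, ∃ C ∈ M, x ∈ C) (x : X) (a : Sec ({x} : Finset X) O) :
    MeasurableSet[MeasurableSpace.generateFrom (VMSet M W.Ebar)] (W.Ebar {x} a) := by
  classical
  rcases hcov x with ⟨C, hCM, hx⟩
  rw [Ebar_single_eq_union W hx a]
  exact Finset.measurableSet_biUnion _ fun t _ =>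
    MeasurableSpace.measurableSet_generateFrom ⟨C, hCM, t, rfl⟩

lemma cellOf_measurable_VM (W : ComboWPSRep M e Y)
    (hcov : ∀ x : X, ∃ C ∈ M, x ∈ C) (s : X → O) :
    MeasurableSet[MeasurableSpace.generateFrom (VMSet M W.Ebar)] (cellOf W s) := by
  rw [cellOf, W.glue]
  exact MeasurableSet.iInter fun x => MeasurableSet.iInter fun hx =>
    Ebar_single_measurable_VM W hcov x _

end Helpers2
section Helpers3
set_option linter.unusedSectionVars false
variable {X O Y : Type*} [Fintype X] [DecidableEq X] [Fintype O] [DecidableEq O]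
  {M : Finset (Finset X)} {e : (C : Finset X) → Sec C O → ℝ}

lemma monext_empty {Sigma' : Set (Set Y)} {mu' : Set Y → ℝ} {Sigma : Set (Set Y)} {mu}
    (hext : MonExt Sigma mu Sigma' mu') : (∅ : Set Y) ∈ Sigma' := by
  have := hext.compl_mem _ hext.univ_mem
  rwa [Set.compl_univ] at this

lemma monext_biUnion {Sigma' : Set (Set Y)} {mu' : Set Y → ℝ} {Sigma : Set (Set Y)} {mu}
    (hext : MonExt Sigma mu Sigma' mu') {ι : Type*} [DecidableEq ι] (F : Finset ι)
    (f : ι → Set Y) (h : ∀ i ∈ F, f i ∈ Sigma') : (⋃ i ∈ F, f i) ∈ Sigma' := by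
  classical
  induction F using Finset.induction_on with
  | empty => simpa using monext_empty hext
  | @insert a F ha ih =>
      rw [Finset.set_biUnion_insert]
      exact hext.union_mem _ (h a (Finset.mem_insert_self a F)) _
        (ih fun i hi => h i (Finset.mem_insert_of_mem hi))

lemma cellOf_eq_iInter (W : ComboWPSRep M e Y) (s : X → O) :
    cellOf W s = ⋂ x : X, W.Ebar {x} ((fun _ => s x) : Sec ({x} : Finset X) O) := by
  rw [cellOf, W.glue]
  ext y
  simp only [Set.mem_iInter]
  constructor
  · intro h x; exact h x (Finset.mem_univ x)
  · intro h x hx; exact h x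

lemma Ebar_single_mem_Sigma' (W : ComboWPSRep M e Y)
    (hcov : ∀ x : X, ∃ C ∈ M, x ∈ C)
    {Sigma' : Set (Set Y)} {mu' : Set Y → ℝ}
    (hext : MonExt (SigmaOf M W.Ebar) W.mu Sigma' mu')
    (x : X) (a : Sec ({x} : Finset X) O) : W.Ebar {x} a ∈ Sigma' := by
  classical
  rcases hcov x with ⟨C, hCM, hx⟩
  rw [Ebar_single_eq_union W hx a]
  exact monext_biUnion hext _ _ fun t _ => hext.sub ⟨C, hCM, Ebar_measurable W C t⟩

lemma cellOf_mem_Sigma' (W : ComboWPSRep M e Y)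
    (hcov : ∀ x : X, ∃ C ∈ M, x ∈ C)
    {Sigma' : Set (Set Y)} {mu' : Set Y → ℝ}
    (hext : MonExt (SigmaOf M W.Ebar) W.mu Sigma' mu')
    (s : X → O) : cellOf W s ∈ Sigma' := by
  classical
  rw [cellOf_eq_iInter]
  have heq : (⋂ x : X, W.Ebar {x} ((fun _ => s x) : Sec ({x} : Finset X) O))
      = (⋃ x ∈ (Finset.univ : Finset X),
          (W.Ebar {x} ((fun _ => s x) : Sec ({x} : Finset X) O))ᶜ)ᶜ := by
    ext y; simp
  rw [heq]
  exact hext.compl_mem _ (monext_biUnion hext _ _ fun x _ =>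
    hext.compl_mem _ (Ebar_single_mem_Sigma' W hcov hext x _))

lemma exists_global_dist (hmodel : IsEmpiricalModel M e) (W : ComboWPSRep M e Y)
    {Sigma' : Set (Set Y)} {mu' : Set Y → ℝ}
    (hext : MonExt (SigmaOf M W.Ebar) W.mu Sigma' mu')
    (hnv : NoViol M W Sigma' mu') :
    ∃ d : (X → O) → ℝ, (∀ s, 0 ≤ d s) ∧ (∑ s, d s = 1) ∧
      ∀ C ∈ M, ∀ t : Sec C O,
        (∑ s ∈ Finset.univ.filter (fun s : X → O => restrictGlobal s C = t), d s)
          = e C t := by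
  classical
  by_cases hM : M = ∅
  · have hX : IsEmpty X := ⟨fun x => by
      rcases hmodel.1 x with ⟨C, hC, _⟩; simp [hM] at hC⟩
    haveI := hX
    haveI : Unique (X → O) :=
      ⟨⟨fun x => (hX.false x).elim⟩, fun f => funext fun x => (hX.false x).elim⟩
    refine ⟨fun _ => 1, fun _ => zero_le_one, ?_, ?_⟩
    · simp
    · intro C hC; rw [hM] at hC; simp at hC
  · obtain ⟨C₀, hC₀⟩ := Finset.nonempty_iff_ne_empty.2 hM
    have hcov := hmodel.1
    refine ⟨fun s => mu' (cellOf W s), fun s => hext.nonneg _ (cellOf_mem_Sigma' W hcov hext s),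
      ?_, ?_⟩
    · -- total mass one
      have h1 := hnv (Finset.univ.image (cellOf W))
        (by
          intro A hA
          rcases Finset.mem_image.1 hA with ⟨s, _, rfl⟩
          exact cellOf_measurable_VM W hcov s)
        (by
          intro A hA
          rcases Finset.mem_coe.1 hA with hA
          rcases Finset.mem_image.1 hA with ⟨s, _, rfl⟩
          exact cellOf_mem_Sigma' W hcov hext s)
        (by
          intro A hA B hB hne
          rcases Finset.mem_image.1 hA with ⟨s, _, rfl⟩
          rcases Finset.mem_image.1 hB with ⟨s', _, rfl⟩
          have : s ≠ s' := fun h => hne (by rw [h])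
          exact Set.disjoint_iff_inter_eq_empty.2 (cellOf_disjoint W this))
        (by
          rw [Finset.coe_image, Set.sUnion_image, Finset.coe_univ, Set.biUnion_univ,
            cellOf_cover]
          exact hext.univ_mem)
      rw [Finset.coe_image, Set.sUnion_image, Finset.coe_univ, Set.biUnion_univ,
        cellOf_cover] at h1
      have h2 : mu' Set.univ = 1 := by
        rw [hext.restricts _ ⟨C₀, hC₀, MeasurableSet.univ⟩, W.wc_univ]
      rw [h2, Finset.sum_image (fun s _ s' _ h => cellOf_inj W h)] at h1
      exact h1.symm
    · -- marginals
      intro C hC t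
      have hmem : W.Ebar C t ∈ Sigma' := hext.sub ⟨C, hC, Ebar_measurable W C t⟩
      have hUeq : ⋃₀ ((((Finset.univ.filter
            (fun s : X → O => restrictGlobal s C = t)).image (cellOf W)) : Finset (Set Y)) :
            Set (Set Y)) = W.Ebar C t := by
        rw [Finset.coe_image, Set.sUnion_image, Ebar_eq_union_cells W C t]
        apply Set.iUnion_congr
        intro s
        simp
      have h1 := hnv ((Finset.univ.filter
            (fun s : X → O => restrictGlobal s C = t)).image (cellOf W))
        (by
          intro A hA
          rcases Finset.mem_image.1 hA with ⟨s, _, rfl⟩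
          exact cellOf_measurable_VM W hcov s)
        (by
          intro A hA
          rcases Finset.mem_coe.1 hA with hA
          rcases Finset.mem_image.1 hA with ⟨s, _, rfl⟩
          exact cellOf_mem_Sigma' W hcov hext s)
        (by
          intro A hA B hB hne
          rcases Finset.mem_image.1 hA with ⟨s, _, rfl⟩
          rcases Finset.mem_image.1 hB with ⟨s', _, rfl⟩
          have : s ≠ s' := fun h => hne (by rw [h])
          exact Set.disjoint_iff_inter_eq_empty.2 (cellOf_disjoint W this))
        (by rw [hUeq]; exact hmem)
      rw [hUeq] at h1
      have h2 : mu' (W.Ebar C t) = e C t := by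
        rw [hext.restricts _ ⟨C, hC, Ebar_measurable W C t⟩,
          W.ec C hC C (Finset.Subset.refl C) t, margin_self]
      rw [h2, Finset.sum_image (fun s _ s' _ h => cellOf_inj W h)] at h1
      exact h1.symm

end Helpers3
section Helpers4
set_option linter.unusedSectionVars false
variable {X O Y : Type*} [Fintype X] [DecidableEq X] [Fintype O] [DecidableEq O]
  {M : Finset (Finset X)} {e : (C : Finset X) → Sec C O → ℝ}

open Classical in
/-- The candidate extension: measure of a set is the total weight of global cells
contained in it. -/
noncomputable def muExt (W : ComboWPSRep M e Y) (d : (X → O) → ℝ) (A : Set Y) : ℝ :=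
  ∑ s ∈ Finset.univ.filter (fun s : X → O => cellOf W s ⊆ A), d s

/-- The candidate σ'-collection: sets saturated w.r.t. the global cells. -/
def SatSets (W : ComboWPSRep M e Y) : Set (Set Y) :=
  {A | ∀ s : X → O, cellOf W s ⊆ A ∨ cellOf W s ∩ A = ∅}

lemma cellOf_subset_single (W : ComboWPSRep M e Y) (s : X → O) (x : X) :
    cellOf W s ⊆ W.Ebar {x} ((fun _ => s x) : Sec ({x} : Finset X) O) := by
  rw [cellOf_eq_iInter]
  exact Set.iInter_subset _ x

lemma sat_or (W : ComboWPSRep M e Y) {x : X} (a : Sec ({x} : Finset X) O) (s : X → O) :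
    cellOf W s ⊆ W.Ebar {x} a ∨ cellOf W s ∩ W.Ebar {x} a = ∅ := by
  by_cases h : ((fun _ => s x) : Sec ({x} : Finset X) O) = a
  · left; rw [← h]; exact cellOf_subset_single W s x
  · right
    have hd := W.sme {x} _ _ h
    have := Set.inter_subset_inter_left (W.Ebar {x} a) (cellOf_subset_single W s x)
    rw [hd] at this
    exact Set.subset_empty_iff.1 this

lemma sigma_subset_sat (W : ComboWPSRep M e Y) : SigmaOf M W.Ebar ⊆ SatSets W := by
  rintro A ⟨C, _, hA⟩
  intro s
  refine sat_induction (cellOf W) ?_ hA s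
  rintro S ⟨x, hx, a, rfl⟩ s'
  exact sat_or W a s'

lemma monext_of_dist (W : ComboWPSRep M e Y) (hmodel : IsEmpiricalModel M e)
    (d : (X → O) → ℝ) (hd0 : ∀ s, 0 ≤ d s) (hd1 : ∑ s, d s = 1)
    (hd2 : ∀ C ∈ M, ∀ t : Sec C O,
      (∑ s ∈ Finset.univ.filter (fun s : X → O => restrictGlobal s C = t), d s) = e C t) :
    MonExt (SigmaOf M W.Ebar) W.mu (SatSets W) (muExt W d) := by
  classical
  constructor
  · exact sigma_subset_sat W
  · intro s; left; exact Set.subset_univ _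
  · -- compl
    intro A hA s
    rcases hA s with h | h
    · right
      rw [Set.eq_empty_iff_forall_notMem]
      rintro y ⟨hy1, hy2⟩
      exact hy2 (h hy1)
    · left
      intro y hy hyA
      exact absurd (Set.mem_inter hy hyA) (by rw [h]; exact Set.notMem_empty y)
  · -- union
    intro A hA B hB s
    rcases hA s with h | h
    · left; exact h.trans Set.subset_union_left
    · rcases hB s with h' | h'
      · left; exact h'.trans Set.subset_union_right
      · right; rw [Set.inter_union_distrib_left, h, h', Set.empty_union]
  · -- restricts
    rintro A ⟨C, hC, hA⟩
    have hsatC : ∀ t : Sec C O, W.Ebar C t ⊆ A ∨ W.Ebar C t ∩ A = ∅ := by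
      refine sat_induction (W.Ebar C) ?_ hA
      rintro S ⟨x, hx, a, rfl⟩ t
      by_cases h : singleSec x hx t = a
      · left; rw [← h]; exact Ebar_subset_single W hx t
      · right
        have hd := W.sme {x} _ _ h
        have hsub := Set.inter_subset_inter_left (W.Ebar {x} a) (Ebar_subset_single W hx t)
        rw [hd] at hsub
        exact Set.subset_empty_iff.1 hsub
    set T : Finset (Sec C O) := Finset.univ.filter (fun t => W.Ebar C t ⊆ A) with hT
    have hAeq : A = ⋃ t ∈ T, W.Ebar C t := by
      apply Set.Subset.antisymm
      · intro y hy
        have : y ∈ ⋃ t : Sec C O, W.Ebar C t := by rw [W.exh C]; trivial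
        rcases Set.mem_iUnion.1 this with ⟨t, ht⟩
        have hsub : W.Ebar C t ⊆ A := by
          rcases hsatC t with h | h
          · exact h
          · exact absurd (Set.mem_inter ht hy) (by rw [h]; exact Set.notMem_empty y)
        exact Set.mem_biUnion (Finset.mem_filter.2 ⟨Finset.mem_univ t, hsub⟩) ht
      · intro y hy
        rcases Set.mem_iUnion₂.1 hy with ⟨t, htm, hyt⟩
        exact (Finset.mem_filter.1 htm).2 hyt
    -- compute W.mu A
    have hmuA : W.mu A = ∑ t ∈ T, e C t := by
      conv_lhs => rw [hAeq]
      rw [mu_biUnion W hC T]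
      refine Finset.sum_congr rfl fun t _ => ?_
      rw [W.ec C hC C (Finset.Subset.refl C) t, margin_self]
    -- characterize cells inside A
    have hcell : ∀ s : X → O, cellOf W s ⊆ A ↔ restrictGlobal s C ∈ T := by
      intro s
      constructor
      · intro hs
        obtain ⟨y, hy⟩ := W.nonempty Finset.univ (restrictGlobal s Finset.univ)
        have hyA : y ∈ A := hs hy
        have hyC : y ∈ W.Ebar C (restrictGlobal s C) := cellOf_subset W C s hy
        have hsub : W.Ebar C (restrictGlobal s C) ⊆ A := by
          rcases hsatC (restrictGlobal s C) with h | h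
          · exact h
          · exact absurd (Set.mem_inter hyC hyA) (by rw [h]; exact Set.notMem_empty y)
        exact Finset.mem_filter.2 ⟨Finset.mem_univ _, hsub⟩
      · intro hs
        exact (cellOf_subset W C s).trans (Finset.mem_filter.1 hs).2
    -- compute muExt
    rw [muExt, hmuA]
    have hfil : Finset.univ.filter (fun s : X → O => cellOf W s ⊆ A)
        = Finset.univ.filter (fun s : X → O => restrictGlobal s C ∈ T) := by
      apply Finset.filter_congr
      intro s _
      simp only [hcell s]
    rw [hfil]
    rw [← Finset.sum_fiberwise_of_maps_to (g := fun s : X → O => restrictGlobal s C)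
      (t := T) (fun s hs => (Finset.mem_filter.1 hs).2)]
    refine Finset.sum_congr rfl fun t ht => ?_
    rw [← hd2 C hC t]
    apply Finset.sum_congr _ (fun _ _ => rfl)
    rw [Finset.filter_filter]
    apply Finset.filter_congr
    intro s _
    constructor
    · rintro ⟨_, h⟩; exact h
    · intro h; exact ⟨by simp only [h]; exact ht, h⟩
  · -- mono
    intro A _ B _ hAB
    apply Finset.sum_le_sum_of_subset_of_nonneg
    · intro s hs; simp only [Finset.mem_filter] at hs ⊢; exact ⟨hs.1, hs.2.trans hAB⟩
    · intro s _ _; exact hd0 s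
  · -- nonneg
    intro A _
    exact Finset.sum_nonneg fun s _ => hd0 s
  · -- le_one
    intro A _
    calc muExt W d A ≤ ∑ s, d s := by
          apply Finset.sum_le_sum_of_subset_of_nonneg (Finset.filter_subset _ _)
          intro s _ _; exact hd0 s
      _ = 1 := hd1

lemma noviol_of_dist (W : ComboWPSRep M e Y)
    (d : (X → O) → ℝ) (hd0 : ∀ s, 0 ≤ d s) :
    NoViol M W (SatSets W) (muExt W d) := by
  classical
  intro V _ hVsub hVdisj _
  have hfib : Finset.univ.filter (fun s : X → O => cellOf W s ⊆ ⋃₀ (V : Set (Set Y)))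
      = V.biUnion (fun A => Finset.univ.filter (fun s : X → O => cellOf W s ⊆ A)) := by
    ext s
    simp only [Finset.mem_filter, Finset.mem_biUnion, Finset.mem_univ, true_and]
    constructor
    · intro hs
      obtain ⟨y, hy⟩ := W.nonempty Finset.univ (restrictGlobal s Finset.univ)
      have hy2 : y ∈ cellOf W s := hy
      rcases Set.mem_sUnion.1 (hs hy2) with ⟨A, hAV, hyA⟩
      have hAV' : A ∈ V := hAV
      have hsat := hVsub hAV' s
      rcases hsat with h | h
      · exact ⟨A, hAV', h⟩
      · exact absurd (Set.mem_inter hy2 hyA) (by rw [h]; exact Set.notMem_empty y)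
    · rintro ⟨A, hAV, h⟩
      exact h.trans (Set.subset_sUnion_of_mem hAV)
  rw [muExt, hfib, Finset.sum_biUnion]
  · rfl
  · intro A hA B hB hne
    refine Finset.disjoint_left.2 fun s hsA hsB => ?_
    obtain ⟨y, hy⟩ := W.nonempty Finset.univ (restrictGlobal s Finset.univ)
    have h1 : y ∈ A := (Finset.mem_filter.1 hsA).2 hy
    have h2 : y ∈ B := (Finset.mem_filter.1 hsB).2 hy
    exact Set.disjoint_left.1 (hVdisj A hA B hB hne) h1 h2

end Helpers4

/-- **Proposition 1.3.** For any combinatorial WPS representation `e†` of an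
empirical model `e`: `e` is probabilistically contextual if and only if every
monotonic extension `(Y, Σ', μ')` of `e†` contains a finite collection of pairwise
disjoint sets belonging to the algebra generated by `V_M` (which, `V_M` being
finite, is its generated σ-algebra) that violates additivity. -/
theorem probabilistically_contextual_iff_extensions_violate_additivity
    {X O Y : Type*} [Fintype X] [DecidableEq X] [Fintype O] [DecidableEq O]
    (M : Finset (Finset X)) (e : (C : Finset X) → Sec C O → ℝ)
    (hmodel : IsEmpiricalModel M e)
    (W : ComboWPSRep M e Y) :
    ProbabilisticallyContextual M e ↔
      ∀ (Sigma' : Set (Set Y)) (mu' : Set Y → ℝ),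
        MonExt (SigmaOf M W.Ebar) W.mu Sigma' mu' →
        ∃ V : Finset (Set Y),
          (∀ A ∈ V, MeasurableSet[MeasurableSpace.generateFrom (VMSet M W.Ebar)] A) ∧
          ↑V ⊆ Sigma' ∧
          (∀ A ∈ V, ∀ B ∈ V, A ≠ B → Disjoint A B) ∧
          ⋃₀ (V : Set (Set Y)) ∈ Sigma' ∧
          mu' (⋃₀ (V : Set (Set Y))) ≠ ∑ A ∈ V, mu' A := by
  classical
  constructor
  · intro hPC Sigma' mu' hext
    by_contra hno
    push_neg at hno
    exact hPC (exists_global_dist hmodel W hext (fun V h1 h2 h3 h4 => hno V h1 h2 h3 h4))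
  · intro hRHS
    rintro ⟨d, hd0, hd1, hd2⟩
    have hext := monext_of_dist W hmodel d hd0 hd1 hd2
    have hnv := noviol_of_dist W d hd0
    rcases hRHS _ _ hext with ⟨V, h1, h2, h3, h4, h5⟩
    exact h5 (hnv V h1 h2 h3 h4)
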